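/- If the K₁-th user is oversized (i.e., ŵ_{K₁} > w̄_{K₁} with K₁ ≥ 1), then w_tot − ∑_{k=1}^{K₁} w̄_k > 0; that is, after all oversized users are assigned their bandwidth upper limits, strictly positive bandwidth remains. -/

import Mathlib

/-- Due share of user `k` in the restricted FDMA problem. -/
noncomputable def dueShare (K : ℕ) (p wb : Fin K → ℝ) (wtot : ℝ) (k : Fin K) : ℝ :=
  (wtot - ∑ k' ∈ Finset.univ.filter (fun k' : Fin K => k' < k), wb k') * p k /
    (∑ k' ∈ Finset.univ.filter (fun k' : Fin K => k ≤ k'), p k')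

/-- If the `K₁`-th user (0-based index `K₁ - 1`) is oversized, then after all `K₁` oversized
users are assigned their bandwidth upper limits, strictly positive bandwidth remains:
`w_tot − ∑_{k ≤ K₁} w̄_k > 0`. -/
theorem stmt_5 (K : ℕ) (p wb : Fin K → ℝ) (hp : ∀ k, 0 < p k) (hwb : ∀ k, 0 < wb k)
    (wtot : ℝ) (hwtot : 0 < wtot)
    (hord : ∀ i j : Fin K, i ≤ j → p j / wb j ≤ p i / wb i)
    (K₁ : ℕ) (hK₁ : K₁ ≤ K) (h1 : 1 ≤ K₁)
    (hover : dueShare K p wb wtot ⟨K₁ - 1, by omega⟩ > wb ⟨K₁ - 1, by omega⟩) :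
    0 < wtot - ∑ k ∈ Finset.univ.filter (fun k : Fin K => (k : ℕ) < K₁), wb k := by
  set k0 : Fin K := ⟨K₁ - 1, by omega⟩ with hk0
  set A := ∑ k' ∈ Finset.univ.filter (fun k' : Fin K => k' < k0), wb k' with hA
  set S := ∑ k' ∈ Finset.univ.filter (fun k' : Fin K => k0 ≤ k'), p k' with hS
  have hmem : k0 ∈ Finset.univ.filter (fun k' : Fin K => k0 ≤ k') := by simp
  have hSpos : 0 < S := Finset.sum_pos (fun i _ => hp i) ⟨k0, hmem⟩
  have hSge : p k0 ≤ S := Finset.single_le_sum (fun i _ => (hp i).le) hmem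
  have hover' : (wtot - A) * p k0 / S > wb k0 := hover
  have h2 : wb k0 * S < (wtot - A) * p k0 := by
    rwa [gt_iff_lt, lt_div_iff₀ hSpos] at hover'
  have h4 : 0 < wtot - A - wb k0 := by nlinarith [hp k0, hwb k0]
  have hset : Finset.univ.filter (fun k : Fin K => (k : ℕ) < K₁)
      = insert k0 (Finset.univ.filter (fun k' : Fin K => k' < k0)) := by
    ext x
    simp [Fin.lt_def, Fin.ext_iff, hk0]
    omega
  rw [hset, Finset.sum_insert (by simp)]
  linarith
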